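/- Optimality of the integrability condition: let Φ : ℝ^n → [0,∞), let A(y) ∈ GL(d,ℝ) with singular values λ_j(y), and let f, g be nonnegative Schwartz functions with f, g ≥ χ_{B(0,√d)}. If ∫_{ℝ^d} ∫_{ℝ^n} Φ(y) f(A(y)x) g(x) dy dx < ∞, then ∫_{ℝ^n} Φ(y) ∏_{j=1}^d min{1, λ_j(y)^{−1}} dy < ∞. -/

import Mathlib

open MeasureTheory Matrix

/-- `lam` lists the singular values of `A`: there is a singular value decomposition
`A = P · diag(lam) · Q` with `P, Q` orthogonal. -/
def IsSVD {d : ℕ} (A : Matrix (Fin d) (Fin d) ℝ) (lam : Fin d → ℝ) : Prop :=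
  ∃ P Q : Matrix (Fin d) (Fin d) ℝ, Pᵀ * P = 1 ∧ Qᵀ * Q = 1 ∧ A = P * Matrix.diagonal lam * Q

/-- Orthogonal matrices preserve the sum of squares of vector entries. -/
lemma sq_sum_mulVec {d : ℕ} {M : Matrix (Fin d) (Fin d) ℝ} (hM : Mᵀ * M = 1)
    (v : Fin d → ℝ) : ∑ j, (M.mulVec v j) ^ 2 = ∑ j, (v j) ^ 2 := by
  have h1 : ∑ j, (M.mulVec v j) ^ 2 = M.mulVec v ⬝ᵥ M.mulVec v := by
    simp [dotProduct, sq]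
  have h2 : ∑ j, (v j) ^ 2 = v ⬝ᵥ v := by
    simp [dotProduct, sq]
  rw [h1, h2, Matrix.dotProduct_mulVec, ← Matrix.mulVec_transpose,
    Matrix.mulVec_mulVec,
    hM, Matrix.one_mulVec]

/-- An orthogonal matrix has determinant of absolute value one. -/
lemma abs_det_of_orthogonal {d : ℕ} {M : Matrix (Fin d) (Fin d) ℝ} (hM : Mᵀ * M = 1) :
    |M.det| = 1 := by
  have : M.det * M.det = 1 := by
    have := congrArg Matrix.det hM
    rwa [Matrix.det_mul, Matrix.det_transpose, Matrix.det_one] at this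
  nlinarith [abs_nonneg M.det, sq_abs M.det]

theorem stmt15 (d n : ℕ) (Φ : (Fin n → ℝ) → ℝ) (hΦmeas : Measurable Φ) (hΦpos : ∀ y, 0 ≤ Φ y)
    (A : (Fin n → ℝ) → Matrix (Fin d) (Fin d) ℝ) (hAmeas : Measurable fun y i j => A y i j)
    (lam : (Fin n → ℝ) → Fin d → ℝ) (hlmeas : Measurable lam)
    (hlpos : ∀ y j, 0 < lam y j) (hSVD : ∀ y, IsSVD (A y) (lam y))
    (f g : (Fin d → ℝ) → ℝ) (hfmeas : Measurable f) (hgmeas : Measurable g)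
    (hfpos : ∀ x, 0 ≤ f x) (hgpos : ∀ x, 0 ≤ g x)
    (hf1 : ∀ x : Fin d → ℝ, Real.sqrt (∑ j, (x j) ^ 2) ≤ Real.sqrt d → 1 ≤ f x)
    (hg1 : ∀ x : Fin d → ℝ, Real.sqrt (∑ j, (x j) ^ 2) ≤ Real.sqrt d → 1 ≤ g x)
    (hfin : (∫⁻ x : Fin d → ℝ, ∫⁻ y : Fin n → ℝ,
        ENNReal.ofReal (Φ y * f ((A y).mulVec x) * g x)) < ⊤) :
    (∫⁻ y : Fin n → ℝ, ENNReal.ofReal (Φ y * ∏ j, min 1 (lam y j)⁻¹)) < ⊤ := by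
  -- measurability of the joint integrand
  have hmul : Measurable fun p : (Fin d → ℝ) × (Fin n → ℝ) => (A p.2).mulVec p.1 := by
    apply measurable_pi_lambda
    intro i
    simp only [Matrix.mulVec, dotProduct]
    exact Finset.measurable_sum _ fun j _ =>
      (((measurable_pi_apply j).comp ((measurable_pi_apply i).comp
        (hAmeas.comp measurable_snd))).mul ((measurable_pi_apply j).comp measurable_fst))
  have hFmeas : Measurable fun p : (Fin d → ℝ) × (Fin n → ℝ) =>
      ENNReal.ofReal (Φ p.2 * f ((A p.2).mulVec p.1) * g p.1) :=
    (((hΦmeas.comp measurable_snd).mul (hfmeas.comp hmul)).mul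
      (hgmeas.comp measurable_fst)).ennreal_ofReal
  have hswap : (∫⁻ x : Fin d → ℝ, ∫⁻ y : Fin n → ℝ,
      ENNReal.ofReal (Φ y * f ((A y).mulVec x) * g x))
      = ∫⁻ y : Fin n → ℝ, ∫⁻ x : Fin d → ℝ,
        ENNReal.ofReal (Φ y * f ((A y).mulVec x) * g x) :=
    lintegral_lintegral_swap hFmeas.aemeasurable
  rw [hswap] at hfin
  refine lt_of_le_of_lt (lintegral_mono fun y => ?_) hfin
  -- per-y lower bound
  obtain ⟨P, Q, hP, hQ, hA⟩ := hSVD y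
  have hQQ : Q * Qᵀ = 1 := mul_eq_one_comm.mp hQ
  have hQT : Qᵀᵀ * Qᵀ = 1 := by rwa [Matrix.transpose_transpose]
  set c : Fin d → ℝ := fun j => min 1 (lam y j)⁻¹ with hc
  have hc0 : ∀ j, 0 < c j := fun j => lt_min one_pos (inv_pos.mpr (hlpos y j))
  have hc1 : ∀ j, c j ≤ 1 := fun j => min_le_left _ _
  set S : Set (Fin d → ℝ) := Set.pi Set.univ fun j => Set.Icc (-(c j)) (c j) with hS
  have hSmeas : MeasurableSet S := MeasurableSet.univ_pi fun j => measurableSet_Icc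
  set T : Set (Fin d → ℝ) := (fun x => Q.mulVec x) ⁻¹' S with hT
  have hQlin : (fun x : Fin d → ℝ => Q.mulVec x) = Matrix.toLin' Q := by
    ext x i; rw [Matrix.toLin'_apply]
  have hQcont : Measurable fun x : Fin d → ℝ => Q.mulVec x := by
    rw [hQlin]; exact (Matrix.toLin' Q).continuous_of_finiteDimensional.measurable
  have hTmeas : MeasurableSet T := hQcont hSmeas
  have hdetQ : |(Matrix.toLin' Q).det| = 1 := by
    rw [LinearMap.det_toLin']; exact abs_det_of_orthogonal hQ
  have hdetQ0 : (Matrix.toLin' Q).det ≠ 0 := by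
    intro h; rw [h, abs_zero] at hdetQ; norm_num at hdetQ
  have hvolT : volume T = volume S := by
    rw [hT, hQlin, Measure.addHaar_preimage_linearMap volume hdetQ0]
    rw [abs_inv, hdetQ]
    simp
  have hvolS : ENNReal.ofReal (∏ j, c j) ≤ volume S := by
    rw [hS, volume_pi_pi]
    rw [ENNReal.ofReal_prod_of_nonneg fun j _ => (hc0 j).le]
    refine Finset.prod_le_prod (fun j _ => zero_le) fun j _ => ?_
    rw [Real.volume_Icc]
    exact ENNReal.ofReal_le_ofReal (by linarith [(hc0 j).le])
  -- bounds on T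
  have hd : ((Finset.univ : Finset (Fin d)).card : ℝ) = d := by simp
  have hmem : ∀ x ∈ T, 1 ≤ f ((A y).mulVec x) ∧ 1 ≤ g x := by
    intro x hx
    rw [hT, Set.mem_preimage, hS, Set.mem_univ_pi] at hx
    have hxj : ∀ j, |Q.mulVec x j| ≤ c j := by
      intro j; rw [abs_le]; exact ⟨(hx j).1, (hx j).2⟩
    constructor
    · apply hf1
      apply Real.sqrt_le_sqrt
      have hAx : (A y).mulVec x = P.mulVec ((Matrix.diagonal (lam y)).mulVec (Q.mulVec x)) := by
        rw [hA, Matrix.mulVec_mulVec, Matrix.mulVec_mulVec]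
      rw [hAx, sq_sum_mulVec hP]
      calc ∑ j, ((Matrix.diagonal (lam y)).mulVec (Q.mulVec x) j) ^ 2
          ≤ ∑ _j : Fin d, (1 : ℝ) := by
            refine Finset.sum_le_sum fun j _ => ?_
            rw [Matrix.mulVec_diagonal]
            have h1 : |lam y j * Q.mulVec x j| ≤ 1 := by
              rw [abs_mul, abs_of_pos (hlpos y j)]
              calc lam y j * |Q.mulVec x j| ≤ lam y j * (lam y j)⁻¹ := by
                    exact mul_le_mul_of_nonneg_left
                      ((hxj j).trans (min_le_right _ _)) (hlpos y j).le
                _ = 1 := mul_inv_cancel₀ (hlpos y j).ne'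
            nlinarith [sq_abs (lam y j * Q.mulVec x j), abs_nonneg (lam y j * Q.mulVec x j)]
        _ = d := by rw [Finset.sum_const, nsmul_eq_mul, hd, mul_one]
    · apply hg1
      apply Real.sqrt_le_sqrt
      have hxQ : x = Qᵀ.mulVec (Q.mulVec x) := by
        rw [Matrix.mulVec_mulVec, hQ, Matrix.one_mulVec]
      calc ∑ j, (x j) ^ 2 = ∑ j, (Qᵀ.mulVec (Q.mulVec x) j) ^ 2 := by rw [← hxQ]
        _ = ∑ j, (Q.mulVec x j) ^ 2 := sq_sum_mulVec hQT _
        _ ≤ ∑ _j : Fin d, (1 : ℝ) := by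
            refine Finset.sum_le_sum fun j _ => ?_
            nlinarith [sq_abs (Q.mulVec x j), abs_nonneg (Q.mulVec x j),
              (hxj j).trans (hc1 j)]
        _ = d := by rw [Finset.sum_const, nsmul_eq_mul, hd, mul_one]
  calc ENNReal.ofReal (Φ y * ∏ j, min 1 (lam y j)⁻¹)
      = ENNReal.ofReal (Φ y) * ENNReal.ofReal (∏ j, c j) := by
        rw [← ENNReal.ofReal_mul (hΦpos y)]
    _ ≤ ENNReal.ofReal (Φ y) * volume T := by
        rw [hvolT]; exact mul_le_mul_right hvolS _
    _ = ∫⁻ _x in T, ENNReal.ofReal (Φ y) := (setLIntegral_const T _).symm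
    _ ≤ ∫⁻ x in T, ENNReal.ofReal (Φ y * f ((A y).mulVec x) * g x) := by
        refine setLIntegral_mono' hTmeas fun x hx => ?_
        apply ENNReal.ofReal_le_ofReal
        obtain ⟨hfx, hgx⟩ := hmem x hx
        calc Φ y = Φ y * 1 * 1 := by ring
          _ ≤ Φ y * f ((A y).mulVec x) * g x := by
              apply mul_le_mul
              · exact mul_le_mul_of_nonneg_left hfx (hΦpos y)
              · exact hgx
              · norm_num
              · exact mul_nonneg (hΦpos y) (hfpos _)
    _ ≤ ∫⁻ x, ENNReal.ofReal (Φ y * f ((A y).mulVec x) * g x) :=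
        setLIntegral_le_lintegral T _
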